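/- For all real numbers a, e, B, the alternating bilinear bracket on ℝ⁴ determined on the standard basis (X₀, X₁, X₂, X₃) by ⁅X₁, X₂⁆ = X₃ + a•X₀, ⁅X₁, X₃⁆ = B•X₂, ⁅X₂, X₃⁆ = −B•X₁, ⁅X₀, X₁⁆ = e•X₂, ⁅X₀, X₂⁆ = −e•X₁, ⁅X₀, X₃⁆ = 0 satisfies the Jacobi identity, and hence defines a Lie algebra structure on ℝ⁴. -/
import Mathlib

noncomputable def contactBr (a e B : ℝ) : (Fin 4 → ℝ) →ₗ[ℝ] (Fin 4 → ℝ) →ₗ[ℝ] (Fin 4 → ℝ) :=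
  LinearMap.mk₂ ℝ
    (fun x y => ![a * (x 1 * y 2 - x 2 * y 1),
      -B * (x 2 * y 3 - x 3 * y 2) - e * (x 0 * y 2 - x 2 * y 0),
      B * (x 1 * y 3 - x 3 * y 1) + e * (x 0 * y 1 - x 1 * y 0),
      x 1 * y 2 - x 2 * y 1])
    (fun x x' y => by funext i; fin_cases i <;> simp <;> ring)
    (fun c x y => by funext i; fin_cases i <;> simp <;> ring)
    (fun x y y' => by funext i; fin_cases i <;> simp <;> ring)
    (fun c x y => by funext i; fin_cases i <;> simp <;> ring)

lemma contactBr_apply (a e B : ℝ) (x y : Fin 4 → ℝ) :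
    contactBr a e B x y = ![a * (x 1 * y 2 - x 2 * y 1),
      -B * (x 2 * y 3 - x 3 * y 2) - e * (x 0 * y 2 - x 2 * y 0),
      B * (x 1 * y 3 - x 3 * y 1) + e * (x 0 * y 1 - x 1 * y 0),
      x 1 * y 2 - x 2 * y 1] := rfl

/-- For all real `a`, `e`, `B`, the alternating bilinear bracket on `ℝ⁴` determined on the
standard basis `X₀, X₁, X₂, X₃` by `⁅X₁, X₂⁆ = X₃ + a•X₀`, `⁅X₁, X₃⁆ = B•X₂`,
`⁅X₂, X₃⁆ = -B•X₁`, `⁅X₀, X₁⁆ = e•X₂`, `⁅X₀, X₂⁆ = -e•X₁`, `⁅X₀, X₃⁆ = 0`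
satisfies the Jacobi identity, and hence defines a Lie algebra structure on `ℝ⁴`. -/
theorem homogeneousContact_bracket_jacobi (a e B : ℝ) :
    ∃ Br : (Fin 4 → ℝ) →ₗ[ℝ] (Fin 4 → ℝ) →ₗ[ℝ] (Fin 4 → ℝ),
      (∀ x, Br x x = 0) ∧
      Br (Pi.single 1 1) (Pi.single 2 1) =
        (Pi.single 3 1 : Fin 4 → ℝ) + a • (Pi.single 0 1 : Fin 4 → ℝ) ∧
      Br (Pi.single 1 1) (Pi.single 3 1) = B • (Pi.single 2 1 : Fin 4 → ℝ) ∧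
      Br (Pi.single 2 1) (Pi.single 3 1) = -B • (Pi.single 1 1 : Fin 4 → ℝ) ∧
      Br (Pi.single 0 1) (Pi.single 1 1) = e • (Pi.single 2 1 : Fin 4 → ℝ) ∧
      Br (Pi.single 0 1) (Pi.single 2 1) = -e • (Pi.single 1 1 : Fin 4 → ℝ) ∧
      Br (Pi.single 0 1) (Pi.single 3 1) = 0 ∧
      ∀ x y z : Fin 4 → ℝ, Br x (Br y z) + Br y (Br z x) + Br z (Br x y) = 0 := by
  refine ⟨contactBr a e B, ?_, ?_, ?_, ?_, ?_, ?_, ?_, ?_⟩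
  · intro x; funext i
    fin_cases i <;> simp [contactBr_apply, mul_comm]
  · funext i
    fin_cases i <;> simp [contactBr_apply, Pi.single_apply]
  · funext i
    fin_cases i <;> simp [contactBr_apply, Pi.single_apply]
  · funext i
    fin_cases i <;> simp [contactBr_apply, Pi.single_apply]
  · funext i
    fin_cases i <;> simp [contactBr_apply, Pi.single_apply]
  · funext i
    fin_cases i <;> simp [contactBr_apply, Pi.single_apply]
  · funext i
    fin_cases i <;> simp [contactBr_apply, Pi.single_apply]
  · intro x y z; funext i
    fin_cases i <;> simp [contactBr_apply] <;> ring
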